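/- Let M ≥ 1 and λ = (λ0,λ1,λ2) ∈ Λ_{Q,M}. Then Im(Φ_λ(1/M, 0)) − √3·Re(Φ_λ(1/M, 0)) = −16·cos(π(2λ1+λ2)/(3M) − π/6)·cos(π(λ1−λ2)/(3M) + π/6)·cos(π(λ1+2λ2)/(3M) + π/6). Moreover, for λ ∈ L_M each of these three cosine factors is nonzero, so the left-hand side is nonzero. -/

import Mathlib

open Finset

/-- The point set `F_{P,M}`: triples of nonnegative integers summing to `M`. -/
def FPM (M : ℕ) : Finset (ℕ × ℕ × ℕ) :=
  (Finset.range (M+1) ×ˢ Finset.range (M+1) ×ˢ Finset.range (M+1)).filter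
    (fun s => s.1 + s.2.1 + s.2.2 = M)

/-- The point set `F_{Q,M}`: triples of `F_{P,M}` with `s1 + 2 s2 ≡ 0 (mod 3)`. -/
def FQM (M : ℕ) : Finset (ℕ × ℕ × ℕ) :=
  (FPM M).filter (fun s => (s.2.1 + 2 * s.2.2) % 3 = 0)

/-- The honeycomb point set `H_M = F_{P,M} \ F_{Q,M}`. -/
def HM (M : ℕ) : Finset (ℕ × ℕ × ℕ) := FPM M \ FQM M

/-- The interior point set `F̃_{P,M}`: triples of strictly positive integers summing to `M`. -/
def FPMint (M : ℕ) : Finset (ℕ × ℕ × ℕ) :=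
  (FPM M).filter (fun s => 0 < s.1 ∧ 0 < s.2.1 ∧ 0 < s.2.2)

/-- The interior point set `F̃_{Q,M}`. -/
def FQMint (M : ℕ) : Finset (ℕ × ℕ × ℕ) :=
  (FPMint M).filter (fun s => (s.2.1 + 2 * s.2.2) % 3 = 0)

/-- The interior honeycomb point set `H̃_M = F̃_{P,M} \ F̃_{Q,M}`. -/
def HMint (M : ℕ) : Finset (ℕ × ℕ × ℕ) := FPMint M \ FQMint M

/-- The weight set `L_M ⊆ Λ_{Q,M}`. -/
def LM (M : ℕ) : Finset (ℕ × ℕ × ℕ) :=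
  (FPM M).filter (fun l => (l.2.1 < l.1 ∧ l.2.2 < l.1) ∨ (l.1 = l.2.1 ∧ l.2.2 < l.1))

/-- The interior weight set `L̃_M`: elements of `L_M` with all coordinates positive. -/
def LMint (M : ℕ) : Finset (ℕ × ℕ × ℕ) :=
  (LM M).filter (fun l => 0 < l.1 ∧ 0 < l.2.1 ∧ 0 < l.2.2)

/-- A triple `s ∈ F_{P,M}` is identified with the point `(s1/M, s2/M)`. -/
noncomputable def pt (M : ℕ) (s : ℕ × ℕ × ℕ) : ℝ × ℝ :=
  ((s.2.1 : ℝ) / M, (s.2.2 : ℝ) / M)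

/-- The Weyl group orbit of the weight `λ` (ordered list, in `ω`-coordinates). -/
def orbit (l : ℕ × ℕ × ℕ) : List (ℤ × ℤ) :=
  [(2*(l.2.1:ℤ)+l.2.2, (l.2.1:ℤ)+2*l.2.2),
   (-(l.2.1:ℤ)+l.2.2, (l.2.1:ℤ)+2*l.2.2),
   (-(l.2.1:ℤ)-2*l.2.2, (l.2.1:ℤ)-l.2.2),
   (-(l.2.1:ℤ)-2*l.2.2, -2*(l.2.1:ℤ)-l.2.2),
   (-(l.2.1:ℤ)+l.2.2, -2*(l.2.1:ℤ)-l.2.2),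
   (2*(l.2.1:ℤ)+l.2.2, (l.2.1:ℤ)-l.2.2)]

/-- The signs `(+,−,+,−,+,−)` attached to the six orbit points for `S`-functions. -/
def orbitSigns : List ℤ := [1, -1, 1, -1, 1, -1]

/-- The Weyl orbit `C`-function `Φ_λ` of `A₂`. -/
noncomputable def PhiC (l : ℕ × ℕ × ℕ) (x : ℝ × ℝ) : ℂ :=
  ((orbit l).map (fun p =>
    Complex.exp (2 * Real.pi * Complex.I / 3 * ((p.1 : ℂ) * (x.1 : ℂ) + (p.2 : ℂ) * (x.2 : ℂ))))).sum

/-- The Weyl orbit `S`-function `φ_λ` of `A₂`. -/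
noncomputable def PhiS (l : ℕ × ℕ × ℕ) (x : ℝ × ℝ) : ℂ :=
  ((orbitSigns.zip (orbit l)).map (fun p => (p.1 : ℂ) *
    Complex.exp (2 * Real.pi * Complex.I / 3 * ((p.2.1 : ℂ) * (x.1 : ℂ) + (p.2.2 : ℂ) * (x.2 : ℂ))))).sum

/-- The Hartley kernel `cas t = cos t + sin t`. -/
noncomputable def cas (t : ℝ) : ℝ := Real.cos t + Real.sin t

/-- The Hartley `C`-function `ζ¹_λ` of `A₂`. -/
noncomputable def zetaC (l : ℕ × ℕ × ℕ) (x : ℝ × ℝ) : ℝ :=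
  ((orbit l).map (fun p => cas (2 * Real.pi / 3 * ((p.1 : ℝ) * x.1 + (p.2 : ℝ) * x.2)))).sum

/-- The Hartley `S`-function `ζ^e_λ` of `A₂`. -/
noncomputable def zetaS (l : ℕ × ℕ × ℕ) (x : ℝ × ℝ) : ℝ :=
  ((orbitSigns.zip (orbit l)).map (fun p => (p.1 : ℝ) *
    cas (2 * Real.pi / 3 * ((p.2.1 : ℝ) * x.1 + (p.2.2 : ℝ) * x.2)))).sum

/-- The number of zero entries of a triple. -/
def zeroCount (s : ℕ × ℕ × ℕ) : ℕ :=
  (if s.1 = 0 then 1 else 0) + (if s.2.1 = 0 then 1 else 0) + (if s.2.2 = 0 then 1 else 0)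

/-- The discrete function `ε`: values `6, 3, 1` for zero, one, two zero entries. -/
def epsF (s : ℕ × ℕ × ℕ) : ℕ :=
  if zeroCount s = 0 then 6 else if zeroCount s = 1 then 3 else 1

/-- The discrete function `h_M`: values `1, 2, 6` for zero, one, two zero entries. -/
def hMF (l : ℕ × ℕ × ℕ) : ℕ :=
  if zeroCount l = 0 then 1 else if zeroCount l = 1 then 2 else 6

/-- The elements `γ₀ = id`, `γ₁`, `γ₂` of `Γ_M` acting as cyclic permutations of Kac
coordinates: `γ₁[λ0,λ1,λ2] = [λ2,λ0,λ1]`, `γ₂[λ0,λ1,λ2] = [λ1,λ2,λ0]`. -/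
def gam (k : Fin 3) (l : ℕ × ℕ × ℕ) : ℕ × ℕ × ℕ :=
  if k = 0 then l else if k = 1 then (l.2.2, l.1, l.2.1) else (l.2.1, l.2.2, l.1)

/-- The normalization function `μ` of a triple of extension coefficients. -/
noncomputable def muNorm (a b c : ℂ) : ℝ :=
  ‖a‖ ^ 2 + ‖b‖ ^ 2 + ‖c‖ ^ 2
    - (a * starRingEnd ℂ b + a * starRingEnd ℂ c + b * starRingEnd ℂ c).re

/-- The intertwining function `β` of two triples of extension coefficients. -/
noncomputable def betaFun (a b c a' b' c' : ℂ) : ℂ :=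
  2 * (a * starRingEnd ℂ a' + b * starRingEnd ℂ b' + c * starRingEnd ℂ c')
    - a * (starRingEnd ℂ b' + starRingEnd ℂ c')
    - b * (starRingEnd ℂ a' + starRingEnd ℂ c')
    - c * (starRingEnd ℂ a' + starRingEnd ℂ b')

/-- The extended `C`-function `Φ^t_λ` with extension coefficients `μ0, μ1, μ2`. -/
noncomputable def PhiCExt (μ0 μ1 μ2 : ℂ) (l : ℕ × ℕ × ℕ) (x : ℝ × ℝ) : ℂ :=
  μ0 * PhiC l x + μ1 * PhiC (gam 1 l) x + μ2 * PhiC (gam 2 l) x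

/-- The extended `S`-function `φ^t_λ` with extension coefficients `μ0, μ1, μ2`. -/
noncomputable def PhiSExt (μ0 μ1 μ2 : ℂ) (l : ℕ × ℕ × ℕ) (x : ℝ × ℝ) : ℂ :=
  μ0 * PhiS l x + μ1 * PhiS (gam 1 l) x + μ2 * PhiS (gam 2 l) x

/-- The extended Hartley `C`-function `ζ^{1,t}_λ` with extension coefficients `μ0, μ1, μ2`. -/
noncomputable def zetaCExt (μ0 μ1 μ2 : ℂ) (l : ℕ × ℕ × ℕ) (x : ℝ × ℝ) : ℂ :=
  μ0 * (zetaC l x : ℂ) + μ1 * (zetaC (gam 1 l) x : ℂ) + μ2 * (zetaC (gam 2 l) x : ℂ)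

/-- The extended Hartley `S`-function `ζ^{e,t}_λ` with extension coefficients `μ0, μ1, μ2`. -/
noncomputable def zetaSExt (μ0 μ1 μ2 : ℂ) (l : ℕ × ℕ × ℕ) (x : ℝ × ℝ) : ℂ :=
  μ0 * (zetaS l x : ℂ) + μ1 * (zetaS (gam 1 l) x : ℂ) + μ2 * (zetaS (gam 2 l) x : ℂ)

/-- product formula for `Im Φ_λ(1/M,0) − √3·Re Φ_λ(1/M,0)` and its
nonvanishing for `λ ∈ L_M`. -/
lemma key_trig (b c : ℝ) :
    2*(Real.sin (2*(b+c)) - Real.sin (2*b) - Real.sin (2*c))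
      - 2*Real.sqrt 3*(Real.cos (2*(b+c)) + Real.cos (2*b) + Real.cos (2*c)) =
    -16 * Real.cos ((b+c) - Real.pi/6) * Real.cos (b + Real.pi/6) * Real.cos (c + Real.pi/6) := by
  have h0 : Real.sin b ^ 2 + Real.cos b ^ 2 = 1 := Real.sin_sq_add_cos_sq b
  have h1 : Real.sin c ^ 2 + Real.cos c ^ 2 = 1 := Real.sin_sq_add_cos_sq c
  have h2 : Real.sqrt 3 ^ 2 = 3 := Real.sq_sqrt (by norm_num)
  simp only [Real.sin_two_mul, Real.cos_two_mul, Real.sin_add, Real.cos_add, Real.cos_sub,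
    Real.cos_pi_div_six, Real.sin_pi_div_six]
  linear_combination
    ((-2)*(Real.sin c)*(Real.cos c) + (-6)*(Real.sin c)^2*(Real.sqrt 3)
      + (2)*(Real.sin c)*(Real.cos c)*(Real.sqrt 3)^2 + (-2)*(Real.cos c)^2*(Real.sqrt 3)) * h0
    + ((-2)*(Real.sin b)*(Real.cos b) + (2)*(Real.sin b)*(Real.cos b)*(Real.sqrt 3)^2
      + (4)*(Real.cos b)^2*(Real.sqrt 3) + (-6)*(Real.sqrt 3)) * h1
    + ((2)*(Real.cos b)^2*(Real.cos c)^2*(Real.sqrt 3)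
      + (-2)*(Real.sin b)*(Real.cos b)*(Real.sin c)*(Real.cos c)*(Real.sqrt 3)
      + (2)*(Real.sin c)*(Real.cos c) + (-2)*(Real.cos b)^2*(Real.sin c)*(Real.cos c)
      + (2)*(Real.sin b)*(Real.cos b) + (-2)*(Real.sin b)*(Real.cos b)*(Real.cos c)^2) * h2

lemma term_re (a1 a2 : ℤ) (x1 x2 : ℝ) :
    (Complex.exp (2 * (Real.pi:ℂ) * Complex.I / 3 * ((a1:ℂ) * (x1:ℂ) + (a2:ℂ) * (x2:ℂ)))).re
      = Real.cos (2*Real.pi/3*((a1:ℝ)*x1+(a2:ℝ)*x2)) := by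
  rw [show 2 * (Real.pi:ℂ) * Complex.I / 3 * ((a1:ℂ) * (x1:ℂ) + (a2:ℂ) * (x2:ℂ))
      = ((2*Real.pi/3*((a1:ℝ)*x1+(a2:ℝ)*x2) : ℝ) : ℂ) * Complex.I by push_cast; ring]
  exact Complex.exp_ofReal_mul_I_re _

lemma term_im (a1 a2 : ℤ) (x1 x2 : ℝ) :
    (Complex.exp (2 * (Real.pi:ℂ) * Complex.I / 3 * ((a1:ℂ) * (x1:ℂ) + (a2:ℂ) * (x2:ℂ)))).im
      = Real.sin (2*Real.pi/3*((a1:ℝ)*x1+(a2:ℝ)*x2)) := by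
  rw [show 2 * (Real.pi:ℂ) * Complex.I / 3 * ((a1:ℂ) * (x1:ℂ) + (a2:ℂ) * (x2:ℂ))
      = ((2*Real.pi/3*((a1:ℝ)*x1+(a2:ℝ)*x2) : ℝ) : ℂ) * Complex.I by push_cast; ring]
  exact Complex.exp_ofReal_mul_I_im _


lemma int_aux {t Mz k : ℤ} (hM : 1 ≤ Mz) (hz : t = (2*k+1)*(3*Mz))
    (hlb : -Mz ≤ t) (hub : t ≤ 3*Mz) : t = 3*Mz := by
  have h0 : (0:ℤ) ≤ 3*Mz := by linarith
  rcases lt_trichotomy k 0 with h|h|h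
  · have hle : 2*k+1 ≤ -1 := by omega
    have := mul_le_mul_of_nonneg_right hle h0
    linarith
  · subst h; linarith
  · have hge : (3:ℤ) ≤ 2*k+1 := by omega
    have := mul_le_mul_of_nonneg_right hge h0
    linarith

theorem PhiC_at_omega1_im_sub_sqrt3_re (M : ℕ) (hM : 1 ≤ M)
    (lam : ℕ × ℕ × ℕ) (hl : lam ∈ FPM M) :
    ((PhiC lam ((1 : ℝ) / M, 0)).im - Real.sqrt 3 * (PhiC lam ((1 : ℝ) / M, 0)).re =
      -16 * Real.cos (Real.pi * (2 * (lam.2.1 : ℝ) + lam.2.2) / (3 * M) - Real.pi / 6) *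
        Real.cos (Real.pi * ((lam.2.1 : ℝ) - lam.2.2) / (3 * M) + Real.pi / 6) *
        Real.cos (Real.pi * ((lam.2.1 : ℝ) + 2 * lam.2.2) / (3 * M) + Real.pi / 6))
    ∧ (lam ∈ LM M →
        (Real.cos (Real.pi * (2 * (lam.2.1 : ℝ) + lam.2.2) / (3 * M) - Real.pi / 6) ≠ 0
         ∧ Real.cos (Real.pi * ((lam.2.1 : ℝ) - lam.2.2) / (3 * M) + Real.pi / 6) ≠ 0
         ∧ Real.cos (Real.pi * ((lam.2.1 : ℝ) + 2 * lam.2.2) / (3 * M) + Real.pi / 6) ≠ 0)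
        ∧ (PhiC lam ((1 : ℝ) / M, 0)).im - Real.sqrt 3 * (PhiC lam ((1 : ℝ) / M, 0)).re ≠ 0) := by
  have hM0 : (M:ℝ) ≠ 0 := Nat.cast_ne_zero.mpr (by omega)
  set b : ℝ := Real.pi * ((lam.2.1 : ℝ) - lam.2.2) / (3 * M) with hb
  set c : ℝ := Real.pi * ((lam.2.1 : ℝ) + 2 * lam.2.2) / (3 * M) with hc
  have hA : Real.pi * (2 * (lam.2.1 : ℝ) + lam.2.2) / (3 * M) = b + c := by
    rw [hb, hc]; ring
  have hmain : (PhiC lam ((1 : ℝ) / M, 0)).im - Real.sqrt 3 * (PhiC lam ((1 : ℝ) / M, 0)).re =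
      -16 * Real.cos ((b+c) - Real.pi / 6) * Real.cos (b + Real.pi / 6) *
        Real.cos (c + Real.pi / 6) := by
    simp only [PhiC, orbit, List.map_cons, List.map_nil, List.sum_cons, List.sum_nil, mul_zero,
      add_zero, Complex.add_re, Complex.add_im, term_re, term_im]
    rw [show 2 * Real.pi / 3 * (((2 * (lam.2.1:ℤ) + (lam.2.2:ℤ) : ℤ) : ℝ) * (1 / (M:ℝ)))
        = 2*(b+c) by rw [hb, hc]; push_cast; field_simp; ring]
    rw [show 2 * Real.pi / 3 * (((-(lam.2.1:ℤ) + (lam.2.2:ℤ) : ℤ) : ℝ) * (1 / (M:ℝ)))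
        = -(2*b) by rw [hb]; push_cast; field_simp; ring]
    rw [show 2 * Real.pi / 3 * (((-(lam.2.1:ℤ) - 2*(lam.2.2:ℤ) : ℤ) : ℝ) * (1 / (M:ℝ)))
        = -(2*c) by rw [hc]; push_cast; field_simp; ring]
    simp only [Real.sin_neg, Real.cos_neg]
    linear_combination key_trig b c
  refine ⟨by rw [hA]; exact hmain, fun hLM => ?_⟩
  have hsum : lam.1 + lam.2.1 + lam.2.2 = M := (Finset.mem_filter.mp hl).2
  have hcond := (Finset.mem_filter.mp hLM).2
  have hπ : Real.pi ≠ 0 := Real.pi_ne_zero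
  have h3M : (3:ℝ) * M ≠ 0 := by positivity
  -- the three cosine factors are nonzero
  have h1 : Real.cos ((b+c) - Real.pi / 6) ≠ 0 := by
    intro h
    obtain ⟨k, hk⟩ := Real.cos_eq_zero_iff.mp h
    rw [hb, hc] at hk
    have : (2*(lam.2.1:ℝ) + lam.2.2) * 2 - M = (2*k+1) * (3*M) := by
      field_simp at hk
      nlinarith [hk, Real.pi_pos]
    have hz : (2*(lam.2.1:ℤ) + lam.2.2) * 2 - M = (2*k+1) * (3*M) := by exact_mod_cast this
    have ht := int_aux (Mz := (M:ℤ)) (by exact_mod_cast hM) hz (by omega) (by omega)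
    omega
  have h2 : Real.cos (b + Real.pi / 6) ≠ 0 := by
    intro h
    obtain ⟨k, hk⟩ := Real.cos_eq_zero_iff.mp h
    rw [hb] at hk
    have : ((lam.2.1:ℝ) - lam.2.2) * 2 + M = (2*k+1) * (3*M) := by
      field_simp at hk
      nlinarith [hk, Real.pi_pos]
    have hz : ((lam.2.1:ℤ) - lam.2.2) * 2 + M = (2*k+1) * (3*M) := by exact_mod_cast this
    have ht := int_aux (Mz := (M:ℤ)) (by exact_mod_cast hM) hz (by omega) (by omega)
    omega
  have h3 : Real.cos (c + Real.pi / 6) ≠ 0 := by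
    intro h
    obtain ⟨k, hk⟩ := Real.cos_eq_zero_iff.mp h
    rw [hc] at hk
    have : ((lam.2.1:ℝ) + 2*lam.2.2) * 2 + M = (2*k+1) * (3*M) := by
      field_simp at hk
      nlinarith [hk, Real.pi_pos]
    have hz : ((lam.2.1:ℤ) + 2*lam.2.2) * 2 + M = (2*k+1) * (3*M) := by exact_mod_cast this
    have ht := int_aux (Mz := (M:ℤ)) (by exact_mod_cast hM) hz (by omega) (by omega)
    omega
  refine ⟨⟨by rwa [hA], h2, h3⟩, ?_⟩
  rw [hmain]
  exact mul_ne_zero (mul_ne_zero (mul_ne_zero (by norm_num) h1) h2) h3
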